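/- Let D be an integer with D > 2, η a nondegenerate symmetric real D×D matrix with inverse η^{μν}, S a finite-dimensional complex vector space, and γ_1, …, γ_D ∈ End(S) satisfying the Clifford relations γ_μ γ_ν + γ_ν γ_μ = 2 η_{μν} · id_S for all μ, ν. Suppose ε : ℝ^D → S is a smooth map satisfying the flat conformal Killing spinor (twistor) equation ∂_μ ε(x) = (1/D) γ_μ Σ_{ν,ρ} η^{νρ} γ_ρ ∂_ν ε(x) for all μ and all x ∈ ℝ^D. Then ε is affine of Clifford type: there exist constant spinors ε₀, η₀ ∈ S such that ε(x) = ε₀ + Σ_μ x^μ γ_μ η₀ for all x ∈ ℝ^D. -/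

import Mathlib

noncomputable section

section aux
variable {D : ℕ} {η : Matrix (Fin D) (Fin D) ℝ}
  {S : Type*} [NormedAddCommGroup S] [NormedSpace ℂ S]
  {γ : Fin D → S →ₗ[ℂ] S}

lemma aux_anticomm (hcl : ∀ μ ν, γ μ ∘ₗ γ ν + γ ν ∘ₗ γ μ
      = ((2 * η μ ν : ℝ) : ℂ) • (LinearMap.id : S →ₗ[ℂ] S)) (μ ν : Fin D) (v : S) :
    γ μ (γ ν v) = (2 * η μ ν : ℝ) • v - γ ν (γ μ v) := by
  have h := congrArg (fun L => L v) (hcl μ ν)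
  simp only [LinearMap.add_apply, LinearMap.comp_apply, LinearMap.smul_apply,
    LinearMap.id_apply, Complex.coe_smul] at h
  exact eq_sub_of_add_eq h

open Matrix in
lemma aux_inv_symm (hηsym : ∀ μ ν, η μ ν = η ν μ) (ν ρ : Fin D) : η⁻¹ ν ρ = η⁻¹ ρ ν := by
  have hT : ηᵀ = η := Matrix.ext fun i j => hηsym j i
  calc η⁻¹ ν ρ = (η⁻¹)ᵀ ρ ν := rfl
    _ = (ηᵀ)⁻¹ ρ ν := by rw [Matrix.transpose_nonsing_inv]
    _ = η⁻¹ ρ ν := by rw [hT]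

lemma aux_contract (hηsym : ∀ μ ν, η μ ν = η ν μ) (hηnd : IsUnit η.det)
    (hcl : ∀ μ ν, γ μ ∘ₗ γ ν + γ ν ∘ₗ γ μ
      = ((2 * η μ ν : ℝ) : ℂ) • (LinearMap.id : S →ₗ[ℂ] S)) (v : S) :
    ∑ ν, ∑ ρ, η⁻¹ ν ρ • γ ρ (γ ν v) = (D : ℝ) • v := by
  have hinv : η⁻¹ * η = 1 := Matrix.nonsing_inv_mul η hηnd
  have swap : ∑ ν, ∑ ρ, η⁻¹ ν ρ • γ ρ (γ ν v) = ∑ ν, ∑ ρ, η⁻¹ ν ρ • γ ν (γ ρ v) := by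
    rw [Finset.sum_comm]
    exact Finset.sum_congr rfl fun ρ _ => Finset.sum_congr rfl fun ν _ => by
      rw [aux_inv_symm hηsym]
  have h2 : (2:ℝ) • (∑ ν, ∑ ρ, η⁻¹ ν ρ • γ ρ (γ ν v)) = (2:ℝ) • ((D:ℝ) • v) := by
    rw [two_smul]
    nth_rewrite 2 [swap]
    rw [← Finset.sum_add_distrib]
    have : ∀ ν ∈ Finset.univ, (∑ ρ, η⁻¹ ν ρ • γ ρ (γ ν v)) + (∑ ρ, η⁻¹ ν ρ • γ ν (γ ρ v))
        = ∑ ρ, (η⁻¹ ν ρ * (2 * η ρ ν)) • v := by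
      intro ν _
      rw [← Finset.sum_add_distrib]
      refine Finset.sum_congr rfl fun ρ _ => ?_
      rw [← smul_add, mul_smul]
      congr 1
      have h := congrArg (fun L => L v) (hcl ρ ν)
      simpa only [LinearMap.add_apply, LinearMap.comp_apply, LinearMap.smul_apply,
        LinearMap.id_apply, Complex.coe_smul] using h
    rw [Finset.sum_congr rfl this]
    have : ∑ ν, ∑ ρ, (η⁻¹ ν ρ * (2 * η ρ ν)) • v
        = (∑ ν, ∑ ρ, η⁻¹ ν ρ * (2 * η ρ ν)) • v := by
      rw [Finset.sum_smul]
      exact Finset.sum_congr rfl fun ν _ => (Finset.sum_smul).symm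
    rw [this]
    have htr : ∑ ν, ∑ ρ, η⁻¹ ν ρ * (2 * η ρ ν) = 2 * D := by
      have : ∀ ν : Fin D, ∑ ρ, η⁻¹ ν ρ * (2 * η ρ ν) = 2 * ((η⁻¹ * η) ν ν) := by
        intro ν
        rw [Matrix.mul_apply, Finset.mul_sum]
        exact Finset.sum_congr rfl fun ρ _ => by ring
      simp only [this, hinv, Matrix.one_apply_eq]
      simp [Finset.sum_const, mul_comm]
    rw [htr]
    rw [mul_smul, two_smul]
  exact smul_right_injective S two_ne_zero h2

lemma key_alg (hD : 2 < D) (hηsym : ∀ μ ν, η μ ν = η ν μ) (hηnd : IsUnit η.det)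
    (hcl : ∀ μ ν, γ μ ∘ₗ γ ν + γ ν ∘ₗ γ μ
      = ((2 * η μ ν : ℝ) : ℂ) • (LinearMap.id : S →ₗ[ℂ] S))
    (T : Fin D → Fin D → S) (hsymm : ∀ μ ν, T μ ν = T ν μ)
    (hT : ∀ μ' μ, T μ' μ = (1 / (D : ℝ)) • γ μ (∑ ν, ∑ ρ, η⁻¹ ν ρ • γ ρ (T μ' ν))) :
    ∀ μ ν, T μ ν = 0 := by
  have hD0 : (D:ℝ) ≠ 0 := Nat.cast_ne_zero.mpr (by omega)
  have hinv : η⁻¹ * η = 1 := Matrix.nonsing_inv_mul η hηnd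
  set Ψ : Fin D → S := fun μ => ∑ ν, ∑ ρ, η⁻¹ ν ρ • γ ρ (T μ ν) with hΨ
  set Θ : S := ∑ ν, ∑ ρ, η⁻¹ ν ρ • γ ρ (Ψ ν) with hΘ
  have step1 : ∀ μ, (D:ℝ) • Ψ μ = ∑ ν, ∑ ρ, η⁻¹ ν ρ • γ ρ (γ μ (Ψ ν)) := by
    intro μ
    have e : Ψ μ = ∑ ν, ∑ ρ, η⁻¹ ν ρ • ((1/(D:ℝ)) • γ ρ (γ μ (Ψ ν))) := by
      rw [hΨ]
      refine Finset.sum_congr rfl fun ν _ => Finset.sum_congr rfl fun ρ _ => ?_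
      rw [hsymm μ ν, hT ν μ, LinearMap.map_smul_of_tower]
    rw [e, Finset.smul_sum]
    refine Finset.sum_congr rfl fun ν _ => ?_
    rw [Finset.smul_sum]
    refine Finset.sum_congr rfl fun ρ _ => ?_
    rw [smul_smul, smul_smul]
    congr 1
    field_simp
  have step2 : ∀ μ, ((D:ℝ) - 2) • Ψ μ = - γ μ Θ := by
    intro μ
    have e1 : ∑ ν, ∑ ρ, η⁻¹ ν ρ • γ ρ (γ μ (Ψ ν))
        = (2:ℝ) • Ψ μ - γ μ Θ := by
      have hγΘ : γ μ Θ = ∑ ν, ∑ ρ, η⁻¹ ν ρ • γ μ (γ ρ (Ψ ν)) := by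
        rw [hΘ, map_sum]
        exact Finset.sum_congr rfl fun ν _ => by
          rw [map_sum]
          exact Finset.sum_congr rfl fun ρ _ => (LinearMap.map_smul_of_tower _ _ _)
      have hdelta : ∑ ν, ∑ ρ, (η⁻¹ ν ρ * (2 * η ρ μ)) • Ψ ν = (2:ℝ) • Ψ μ := by
        have : ∀ ν : Fin D, ∑ ρ, (η⁻¹ ν ρ * (2 * η ρ μ)) • Ψ ν
            = (2 * ((η⁻¹ * η) ν μ)) • Ψ ν := by
          intro ν
          rw [← Finset.sum_smul]
          congr 1
          rw [Matrix.mul_apply, Finset.mul_sum]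
          exact Finset.sum_congr rfl fun ρ _ => by ring
        simp only [this, hinv, Matrix.one_apply]
        rw [Finset.sum_congr rfl (fun ν _ => rfl)]
        simp [Finset.sum_ite_eq', two_smul]
      rw [hγΘ, ← hdelta, ← Finset.sum_sub_distrib]
      refine Finset.sum_congr rfl fun ν _ => ?_
      rw [← Finset.sum_sub_distrib]
      refine Finset.sum_congr rfl fun ρ _ => ?_
      rw [aux_anticomm hcl ρ μ (Ψ ν), smul_sub, smul_smul]
    have := step1 μ
    rw [e1] at this
    have h2 : ((D:ℝ) - 2) • Ψ μ = (D:ℝ) • Ψ μ - (2:ℝ) • Ψ μ := by rw [sub_smul]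
    rw [h2, this]
    abel
  have hΘ0 : Θ = 0 := by
    have e : ((D:ℝ) - 2) • Θ = - ((D:ℝ) • Θ) := by
      calc ((D:ℝ) - 2) • Θ = ∑ ν, ∑ ρ, η⁻¹ ν ρ • γ ρ (((D:ℝ) - 2) • Ψ ν) := by
            rw [hΘ, Finset.smul_sum]
            refine Finset.sum_congr rfl fun ν _ => ?_
            rw [Finset.smul_sum]
            refine Finset.sum_congr rfl fun ρ _ => ?_
            rw [smul_comm, LinearMap.map_smul_of_tower]
        _ = - ∑ ν, ∑ ρ, η⁻¹ ν ρ • γ ρ (γ ν Θ) := by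
            rw [← Finset.sum_neg_distrib]
            refine Finset.sum_congr rfl fun ν _ => ?_
            rw [← Finset.sum_neg_distrib]
            refine Finset.sum_congr rfl fun ρ _ => ?_
            rw [step2 ν, map_neg, smul_neg]
        _ = - ((D:ℝ) • Θ) := by rw [aux_contract hηsym hηnd hcl]
    have h2 : (2*(D:ℝ) - 2) • Θ = 0 := by
      have : ((D:ℝ) - 2) • Θ + (D:ℝ) • Θ = 0 := by rw [e]; abel
      rw [← this, ← add_smul]; congr 1; ring
    rcases smul_eq_zero.mp h2 with h | h
    · exfalso
      have : (2:ℝ) < D := by exact_mod_cast hD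
      nlinarith
    · exact h
  have hΨ0 : ∀ μ, Ψ μ = 0 := by
    intro μ
    have := step2 μ
    rw [hΘ0, map_zero, neg_zero] at this
    rcases smul_eq_zero.mp this with h | h
    · exfalso
      have : (2:ℝ) < D := by exact_mod_cast hD
      nlinarith
    · exact h
  intro μ ν
  rw [hT μ ν]
  have : (∑ ν', ∑ ρ, η⁻¹ ν' ρ • γ ρ (T μ ν')) = Ψ μ := rfl
  rw [this, hΨ0, map_zero, smul_zero]
end aux

/-- in flat space of dimension `D > 2` with nondegenerate symmetric metric
`η` and gamma matrices satisfying the Clifford relations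
`γ_μ γ_ν + γ_ν γ_μ = 2 η_{μν} id`, every smooth solution of the conformal Killing spinor
(twistor) equation `∂_μ ε = (1/D) γ_μ η^{νρ} γ_ρ ∂_ν ε` is of the form
`ε(x) = ε₀ + x^μ γ_μ η₀` for constant spinors `ε₀, η₀`. -/
theorem stmt_16 (D : ℕ) (hD : 2 < D) (η : Matrix (Fin D) (Fin D) ℝ)
    (hηsym : ∀ μ ν, η μ ν = η ν μ) (hηnd : IsUnit η.det)
    (S : Type*) [NormedAddCommGroup S] [NormedSpace ℂ S] [FiniteDimensional ℂ S]
    (γ : Fin D → S →ₗ[ℂ] S)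
    (hcl : ∀ μ ν, γ μ ∘ₗ γ ν + γ ν ∘ₗ γ μ
      = ((2 * η μ ν : ℝ) : ℂ) • (LinearMap.id : S →ₗ[ℂ] S))
    (ε : (Fin D → ℝ) → S) (hε : ContDiff ℝ (⊤ : ℕ∞) ε)
    (heq : ∀ μ x, fderiv ℝ ε x (Pi.single μ 1)
      = (1 / (D : ℝ)) • γ μ (∑ ν, ∑ ρ, η⁻¹ ν ρ • γ ρ (fderiv ℝ ε x (Pi.single ν 1)))) :
    ∃ ε₀ η₀ : S, ∀ x, ε x = ε₀ + ∑ μ, x μ • γ μ η₀ := by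
  classical
  have hD0 : (D:ℝ) ≠ 0 := Nat.cast_ne_zero.mpr (by omega)
  let gc : Fin D → S →L[ℝ] S := fun ρ => LinearMap.toContinuousLinearMap ((γ ρ).restrictScalars ℝ)
  have hgc : ∀ ρ v, gc ρ v = γ ρ v := fun ρ v => rfl
  set A : (Fin D → ℝ) → ((Fin D → ℝ) →L[ℝ] S) := fderiv ℝ ε with hAdef
  have hεdiff : Differentiable ℝ ε := hε.differentiable (by simp)
  have hAc : ContDiff ℝ (⊤:ℕ∞) A := hε.fderiv_right (by simp)
  have hAdiff : Differentiable ℝ A := hAc.differentiable (by simp)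
  set B : (Fin D → ℝ) → ((Fin D → ℝ) →L[ℝ] (Fin D → ℝ) →L[ℝ] S) :=
    fun x => fderiv ℝ A x with hBdef
  have hAB : ∀ x, HasFDerivAt A (B x) x := fun x => (hAdiff x).hasFDerivAt
  have hεA : ∀ x, HasFDerivAt ε (A x) x := fun x => (hεdiff x).hasFDerivAt
  have hsym : ∀ x u v, B x u v = B x v u := fun x => second_derivative_symmetric hεA (hAB x)
  let M : Fin D → (((Fin D → ℝ) →L[ℝ] S) →L[ℝ] S) := fun μ =>
    (1/(D:ℝ)) • (gc μ).comp
      (∑ ν, ∑ ρ, η⁻¹ ν ρ • (gc ρ).comp (ContinuousLinearMap.apply ℝ S (Pi.single ν 1)))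
  have hMval : ∀ μ (P : (Fin D → ℝ) →L[ℝ] S),
      M μ P = (1/(D:ℝ)) • γ μ (∑ ν, ∑ ρ, η⁻¹ ν ρ • γ ρ (P (Pi.single ν 1))) := by
    intro μ P
    simp only [M, ContinuousLinearMap.smul_apply, ContinuousLinearMap.coe_comp',
      Function.comp_apply, ContinuousLinearMap.coe_sum', Finset.sum_apply,
      ContinuousLinearMap.apply_apply, hgc]
  have hM : ∀ μ x, A x (Pi.single μ 1) = M μ (A x) := by
    intro μ x
    rw [hMval μ (A x)]
    exact heq μ x
  have hMder : ∀ μ x u, B x u (Pi.single μ 1) = M μ (B x u) := by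
    intro μ x u
    have h1' := ((ContinuousLinearMap.apply ℝ S (Pi.single μ 1)).hasFDerivAt).comp x (hAB x)
    have h1 : HasFDerivAt (fun y => A y (Pi.single μ 1))
        ((ContinuousLinearMap.apply ℝ S (Pi.single μ 1)).comp (B x)) x := h1'
    have h3 : HasFDerivAt (fun y => M μ (A y)) ((M μ).comp (B x)) x :=
      (M μ).hasFDerivAt.comp x (hAB x)
    have h2 : HasFDerivAt (fun y => A y (Pi.single μ 1)) ((M μ).comp (B x)) x := by
      have he : (fun y => M μ (A y)) = fun y => A y (Pi.single μ 1) :=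
        funext fun y => (hM μ y).symm
      rwa [he] at h3
    have huniq := h1.unique h2
    calc B x u (Pi.single μ 1)
        = ((ContinuousLinearMap.apply ℝ S (Pi.single μ 1)).comp (B x)) u := rfl
      _ = ((M μ).comp (B x)) u := by rw [huniq]
      _ = M μ (B x u) := rfl
  have hB0 : ∀ x μ ν, B x (Pi.single μ 1) (Pi.single ν 1) = 0 := by
    intro x
    refine key_alg hD hηsym hηnd hcl (fun μ ν => B x (Pi.single μ 1) (Pi.single ν 1))
      (fun μ ν => hsym x _ _) ?_
    intro μ' μ
    rw [hMder μ x (Pi.single μ' 1), hMval]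
  have hBzero : ∀ x, B x = 0 := by
    intro x
    apply ContinuousLinearMap.ext; intro u
    apply ContinuousLinearMap.ext; intro v
    have hu : (∑ i, u i • (Pi.single i (1:ℝ) : Fin D → ℝ)) = u := by
      simp [← Pi.single_smul, Finset.univ_sum_single]
    have hv : (∑ i, v i • (Pi.single i (1:ℝ) : Fin D → ℝ)) = v := by
      simp [← Pi.single_smul, Finset.univ_sum_single]
    rw [← hu, ← hv]
    simp [map_sum, map_smul, hB0 x]
  have hAconst : ∀ x, A x = A 0 := by
    intro x
    exact is_const_of_fderiv_eq_zero hAdiff (fun y => hBzero y) x 0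
  have haff : ∀ x, ε x = ε 0 + A 0 x := by
    intro x
    have hg : ∀ y, HasFDerivAt (fun z => ε z - A 0 z) (A y - A 0) y :=
      fun y => (hεA y).sub (A 0).hasFDerivAt
    have hgdiff : Differentiable ℝ (fun z => ε z - A 0 z) :=
      fun y => (hg y).differentiableAt
    have hgconst := is_const_of_fderiv_eq_zero hgdiff (fun y => by
      rw [(hg y).fderiv, hAconst y, sub_self]) x 0
    have hz : A 0 (0 : Fin D → ℝ) = 0 := map_zero _
    rw [hz, sub_zero] at hgconst
    have := sub_eq_iff_eq_add.mp hgconst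
    exact this
  refine ⟨ε 0, (1/(D:ℝ)) • (∑ ν, ∑ ρ, η⁻¹ ν ρ • γ ρ (A 0 (Pi.single ν 1))), ?_⟩
  intro x
  rw [haff x]
  congr 1
  have hx : (∑ i, x i • (Pi.single i (1:ℝ) : Fin D → ℝ)) = x := by
    simp [← Pi.single_smul, Finset.univ_sum_single]
  conv_lhs => rw [← hx]
  rw [map_sum]
  refine Finset.sum_congr rfl fun μ _ => ?_
  rw [map_smul]
  congr 1
  rw [show A 0 (Pi.single μ 1) = (1/(D:ℝ)) • γ μ
      (∑ ν, ∑ ρ, η⁻¹ ν ρ • γ ρ (A 0 (Pi.single ν 1))) from heq μ 0]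
  rw [← LinearMap.map_smul_of_tower]
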